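/- If (u, v) is a rational point on Y² = X³ - N²X with u ≠ 0 and v ≠ 0, then a = |v/u|, b = 2N/a, h = |(u² + N²)/v| are the sides of a right triangle with area N, i.e., a² + b² = h² and ab/2 = N. -/

import Mathlib

theorem stmt_2 (N : ℕ) (hN : 0 < N) (u v : ℚ)
    (hcurve : v ^ 2 = u ^ 3 - N ^ 2 * u) (hu : u ≠ 0) (hv : v ≠ 0) :
    let a := |v / u|
    let b := 2 * N / a
    let h := |(u ^ 2 + N ^ 2) / v|
    a ^ 2 + b ^ 2 = h ^ 2 ∧ a * b / 2 = N := by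
  intro a b h
  have ha : a ≠ 0 := by
    simp only [a, abs_ne_zero]
    exact div_ne_zero hv hu
  constructor
  · have ha2 : a ^ 2 = v ^ 2 / u ^ 2 := by
      simp only [a, sq_abs, div_pow]
    have hb2 : b ^ 2 = 4 * N ^ 2 * u ^ 2 / v ^ 2 := by
      simp only [b, div_pow, ha2]
      field_simp
      ring
    have hh2 : h ^ 2 = (u ^ 2 + N ^ 2) ^ 2 / v ^ 2 := by
      simp only [h, sq_abs, div_pow]
    rw [ha2, hb2, hh2]
    field_simp
    linear_combination (v^2 + u^3 - (N:ℚ)^2*u) * hcurve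
  · field_simp [b]
    exact mul_div_cancel₀ _ ha
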